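/- (Model error bound (4.14) for the structured quasi-Newton subproblem of the linear eigenvalue problem.) Let C, C^k ∈ ℝ^{n×n} be symmetric, let X, Z ∈ ℝ^{n×p} satisfy XᵀX = ZᵀZ = I_p, suppose CX = C^kX, and let τ ≥ 0. Define f(Y) := (1/2)tr(YᵀCY) and m(Y) := (1/2)tr(YᵀC^kY) + (τ/4)‖YYᵀ − XXᵀ‖_F². Then f(Z) − f(X) − (m(Z) − m(X)) ≤ (1/2)‖C − C^k‖₂ ‖ZZᵀ − XXᵀ‖_F², where ‖·‖₂ denotes the spectral norm. -/

import Mathlib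

open Matrix

/-- The objective `f(Y) = (1/2) tr(YᵀCY)` of the linear eigenvalue problem. -/
noncomputable def eigObj {n p : ℕ} (C : Matrix (Fin n) (Fin n) ℝ)
    (Y : Matrix (Fin n) (Fin p) ℝ) : ℝ :=
  (1 / 2) * (Yᵀ * C * Y).trace

/-- The regularized model `m(Y) = (1/2) tr(YᵀC^kY) + (τ/4)‖YYᵀ − XXᵀ‖_F²`. -/
noncomputable def eigModel {n p : ℕ} (Ck : Matrix (Fin n) (Fin n) ℝ)
    (X : Matrix (Fin n) (Fin p) ℝ) (τ : ℝ) (Y : Matrix (Fin n) (Fin p) ℝ) : ℝ :=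
  (1 / 2) * (Yᵀ * Ck * Y).trace
    + (τ / 4) * ((Y * Yᵀ - X * Xᵀ)ᵀ * (Y * Yᵀ - X * Xᵀ)).trace

lemma key_vec_bound {n : ℕ} (E : Matrix (Fin n) (Fin n) ℝ) (v : Fin n → ℝ) :
    ∑ i, v i * (E.mulVec v) i ≤ ‖Matrix.toEuclideanCLM (𝕜 := ℝ) E‖ * ∑ i, v i ^ 2 := by
  set w : EuclideanSpace ℝ (Fin n) := (WithLp.equiv 2 (Fin n → ℝ)).symm v with hw
  have h1 : ∑ i, v i * (E.mulVec v) i = inner ℝ w (Matrix.toEuclideanCLM (𝕜 := ℝ) E w) := by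
    rw [hw, WithLp.equiv_symm_apply, toEuclideanCLM_toLp]
    simp [PiLp.inner_apply, hw, Matrix.toLin'_apply, mul_comm]
  have h2 : ∑ i, v i ^ 2 = ‖w‖ ^ 2 := by
    rw [EuclideanSpace.norm_eq, Real.sq_sqrt (by positivity)]
    simp [hw, sq_abs]
  rw [h1, h2]
  calc inner ℝ w (Matrix.toEuclideanCLM (𝕜 := ℝ) E w)
      ≤ ‖w‖ * ‖Matrix.toEuclideanCLM (𝕜 := ℝ) E w‖ := real_inner_le_norm _ _
    _ ≤ ‖w‖ * (‖Matrix.toEuclideanCLM (𝕜 := ℝ) E‖ * ‖w‖) := by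
        gcongr; exact (Matrix.toEuclideanCLM (𝕜 := ℝ) E).le_opNorm w
    _ = ‖Matrix.toEuclideanCLM (𝕜 := ℝ) E‖ * ‖w‖ ^ 2 := by ring

/-- Model error bound (4.14) for the structured quasi-Newton subproblem of the
linear eigenvalue problem:
`f(Z) − f(X) − (m(Z) − m(X)) ≤ (1/2)‖C − C^k‖₂ ‖ZZᵀ − XXᵀ‖_F²`. -/
theorem model_error_bound (n p : ℕ)
    (C Ck : Matrix (Fin n) (Fin n) ℝ) (hC : Cᵀ = C) (hCk : Ckᵀ = Ck)
    (X Z : Matrix (Fin n) (Fin p) ℝ)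
    (hX : Xᵀ * X = 1) (hZ : Zᵀ * Z = 1)
    (hsec : C * X = Ck * X) (τ : ℝ) (hτ : 0 ≤ τ) :
    eigObj C Z - eigObj C X - (eigModel Ck X τ Z - eigModel Ck X τ X)
      ≤ (1 / 2) * ‖Matrix.toEuclideanCLM (𝕜 := ℝ) (C - Ck)‖
          * ((Z * Zᵀ - X * Xᵀ)ᵀ * (Z * Zᵀ - X * Xᵀ)).trace := by
  set E : Matrix (Fin n) (Fin n) ℝ := C - Ck with hE
  set D : Matrix (Fin n) (Fin n) ℝ := Z * Zᵀ - X * Xᵀ with hD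
  have hEsymm : Eᵀ = E := by rw [hE, transpose_sub, hC, hCk]
  have hDsymm : Dᵀ = D := by
    rw [hD, transpose_sub, transpose_mul, transpose_mul, transpose_transpose,
        transpose_transpose]
  have hEX : E * X = 0 := by rw [hE, Matrix.sub_mul, hsec, sub_self]
  have hXE : Xᵀ * E = 0 := by
    have : Xᵀ * E = (Eᵀ * X)ᵀ := by rw [transpose_mul, transpose_transpose]
    rw [this, hEsymm, hEX, transpose_zero]
  -- matrix identity: DᵀED = ZZᵀ E ZZᵀ
  have hmat : Dᵀ * E * D = Z * (Zᵀ * E * Z) * Zᵀ := by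
    rw [hDsymm, hD]
    have h1 : (Z * Zᵀ - X * Xᵀ) * E = Z * Zᵀ * E := by
      rw [sub_mul, Matrix.mul_assoc X Xᵀ E, hXE, Matrix.mul_zero, sub_zero]
    rw [h1]
    have h2 : Z * Zᵀ * E * (Z * Zᵀ - X * Xᵀ) = Z * Zᵀ * E * (Z * Zᵀ) := by
      rw [Matrix.mul_sub]
      have : Z * Zᵀ * E * (X * Xᵀ) = 0 := by
        rw [← Matrix.mul_assoc, Matrix.mul_assoc (Z * Zᵀ) E X, hEX, Matrix.mul_zero,
          Matrix.zero_mul]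
      rw [this, sub_zero]
    rw [h2]
    simp only [Matrix.mul_assoc]
  -- trace identity: tr(ZᵀEZ) = tr(DᵀED)
  have htrace : (Zᵀ * E * Z).trace = (Dᵀ * E * D).trace := by
    rw [hmat, Matrix.trace_mul_cycle Z (Zᵀ * E * Z) Zᵀ, ← Matrix.mul_assoc, hZ, Matrix.one_mul]
  -- columnwise bound : tr(DᵀED) ≤ ‖E‖ tr(DᵀD)
  have hdiag : ∀ j, (Dᵀ * E * D) j j = ∑ i, D i j * (E.mulVec (fun k => D k j)) i := by
    intro j
    rw [Matrix.mul_assoc]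
    simp [Matrix.mul_apply, Matrix.mulVec, dotProduct]
  have hdiag2 : ∀ j, (Dᵀ * D) j j = ∑ i, (D i j) ^ 2 := by
    intro j
    simp [Matrix.mul_apply, sq]
  have hbound : (Dᵀ * E * D).trace ≤ ‖Matrix.toEuclideanCLM (𝕜 := ℝ) E‖ * (Dᵀ * D).trace := by
    rw [Matrix.trace, Matrix.trace, Finset.mul_sum]
    apply Finset.sum_le_sum
    intro j _
    rw [Matrix.diag_apply, Matrix.diag_apply, hdiag j, hdiag2 j]
    exact key_vec_bound E (fun k => D k j)
  have hDD : 0 ≤ (Dᵀ * D).trace := by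
    rw [Matrix.trace]
    apply Finset.sum_nonneg
    intro j _
    rw [Matrix.diag_apply, hdiag2 j]
    positivity
  -- LHS simplification
  have hfX : (Xᵀ * C * X).trace = (Xᵀ * Ck * X).trace := by
    rw [Matrix.mul_assoc, Matrix.mul_assoc, hsec]
  have hmodelX : eigModel Ck X τ X = (1 / 2) * (Xᵀ * Ck * X).trace := by
    rw [eigModel, sub_self, Matrix.transpose_zero, Matrix.zero_mul, Matrix.trace_zero,
      mul_zero, add_zero]
  have hZE : (Zᵀ * C * Z).trace - (Zᵀ * Ck * Z).trace = (Zᵀ * E * Z).trace := by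
    rw [hE, Matrix.mul_sub, Matrix.sub_mul, Matrix.trace_sub]
  have hLHS : eigObj C Z - eigObj C X - (eigModel Ck X τ Z - eigModel Ck X τ X)
      = (1 / 2) * (Zᵀ * E * Z).trace - (τ / 4) * (Dᵀ * D).trace := by
    rw [eigObj, eigObj, eigModel, hmodelX, hfX, ← hD, ← hZE]
    ring
  rw [hLHS, htrace]
  have h1 : (1 / 2) * (Dᵀ * E * D).trace - (τ / 4) * (Dᵀ * D).trace
      ≤ (1 / 2) * (Dᵀ * E * D).trace := by
    have : 0 ≤ (τ / 4) * (Dᵀ * D).trace := by positivity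
    linarith
  calc (1 / 2) * (Dᵀ * E * D).trace - (τ / 4) * (Dᵀ * D).trace
      ≤ (1 / 2) * (Dᵀ * E * D).trace := h1
    _ ≤ (1 / 2) * (‖Matrix.toEuclideanCLM (𝕜 := ℝ) E‖ * (Dᵀ * D).trace) := by linarith
    _ = (1 / 2) * ‖Matrix.toEuclideanCLM (𝕜 := ℝ) E‖ * (Dᵀ * D).trace := by ring
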